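/- arXiv:2507.18456 — 15 statements merged into one kernel-verified Lean document; each statement's English description precedes it below -/
import Mathlib

section
/- Let α : H → H, β : K → H be maps and γ : H → K, δ : K → K be group homomorphisms satisfying, for all h, h' ∈ H and k, k' ∈ K: α(h·h') = α(h) · f_{γ(h)}(α(h')); β(k·k') = β(k) · f_{δ(k)}(β(k')); γ(f_k(h)) · δ(k) = δ(k) · γ(h); and α(f_k(h)) · f_{γ(f_k(h))}(β(k)) = β(k) · f_{δ(k)}(α(h)). Then the map θ : G → G defined by θ(h,k) = (α(h) · f_{γ(h)}(β(k)), γ(h)·δ(k)) is a group homomorphism (endomorphism of G). -/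
/-- Given maps `α : H → H`, `β : K → H` and group homomorphisms
`γ : H → K`, `δ : K → K` satisfying the four matrix conditions, the map
`θ (h, k) = (α h * f (γ h) (β k), γ h * δ k)` is an endomorphism of `G = H ⋊[f] K`. -/
theorem endomorphism_of_matrix
    {H K : Type*} [Group H] [Group K] (f : K →* MulAut H)
    (α : H → H) (β : K → H) (γ : H →* K) (δ : K →* K)
    (h1 : ∀ h h' : H, α (h * h') = α h * f (γ h) (α h'))
    (h2 : ∀ k k' : K, β (k * k') = β k * f (δ k) (β k'))
    (h3 : ∀ (h : H) (k : K), γ (f k h) * δ k = δ k * γ h)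
    (h4 : ∀ (h : H) (k : K),
      α (f k h) * f (γ (f k h)) (β k) = β k * f (δ k) (α h)) :
    ∀ x y : H ⋊[f] K,
      (fun g : H ⋊[f] K =>
          (⟨α g.left * f (γ g.left) (β g.right), γ g.left * δ g.right⟩ :
            H ⋊[f] K)) (x * y) =
        (fun g : H ⋊[f] K =>
          (⟨α g.left * f (γ g.left) (β g.right), γ g.left * δ g.right⟩ :
            H ⋊[f] K)) x *
        (fun g : H ⋊[f] K =>
          (⟨α g.left * f (γ g.left) (β g.right), γ g.left * δ g.right⟩ :
            H ⋊[f] K)) y := by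
  rintro ⟨h, k⟩ ⟨h', k'⟩
  have key : ∀ b : H, f (γ ((f k) h')) ((f (δ k)) b) = f (δ k) (f (γ h') b) := by
    intro b
    rw [← MulAut.mul_apply, ← map_mul, h3, map_mul, MulAut.mul_apply]
  ext
  · show α (h * f k h') * f (γ (h * f k h')) (β (k * k')) =
      (α h * f (γ h) (β k)) * f (γ h * δ k) (α h' * f (γ h') (β k'))
    simp only [h1, h2, map_mul, MulAut.mul_apply, mul_assoc]
    congr 1
    rw [← map_mul, ← map_mul, ← map_mul, ← map_mul, ← map_mul, ← map_mul]
    congr 1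
    rw [map_mul, ← mul_assoc, h4, key, mul_assoc, map_mul]
  · show γ (h * f k h') * δ (k * k') = (γ h * δ k) * (γ h' * δ k')
    simp only [map_mul, mul_assoc]
    rw [← mul_assoc (γ (f k h')), h3, mul_assoc]
end

section
/- Let θ and θ' be endomorphisms of G with matrices (α, β, γ, δ) and (α', β', γ', δ') respectively. Then the matrix (a, b, c, d) of the composite θ' ∘ θ is given for all h ∈ H and k ∈ K by: a(h) = α'(α(h)) · f_{γ'(α(h))}(β'(γ(h))); b(k) = α'(β(k)) · f_{γ'(β(k))}(β'(δ(k))); c(h) = γ'(α(h)) · δ'(γ(h)); and d(k) = γ'(β(k)) · δ'(δ(k)). -/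
lemma split_pair {H K : Type*} [Group H] [Group K] (f : K →* MulAut H) (h : H) (k : K) :
    (⟨h, k⟩ : H ⋊[f] K) = ⟨h, 1⟩ * ⟨1, k⟩ := by
  ext <;> simp

/-- If `θ` and `θ'` are endomorphisms of `G = H ⋊[f] K` with matrices
`(α, β, γ, δ)` and `(α', β', γ', δ')`, then the matrix `(a, b, c, d)` of the composite
`θ' ∘ θ` is given by `a h = α' (α h) * f (γ' (α h)) (β' (γ h))`,
`b k = α' (β k) * f (γ' (β k)) (β' (δ k))`, `c h = γ' (α h) * δ' (γ h)` and
`d k = γ' (β k) * δ' (δ k)`. -/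
theorem matrix_of_composite
    {H K : Type*} [Group H] [Group K] (f : K →* MulAut H)
    (θ θ' : (H ⋊[f] K) →* (H ⋊[f] K))
    (α : H → H) (β : K → H) (γ : H → K) (δ : K → K)
    (α' : H → H) (β' : K → H) (γ' : H → K) (δ' : K → K)
    (hθH : ∀ h : H, θ ⟨h, 1⟩ = ⟨α h, γ h⟩)
    (hθK : ∀ k : K, θ ⟨1, k⟩ = ⟨β k, δ k⟩)
    (hθ'H : ∀ h : H, θ' ⟨h, 1⟩ = ⟨α' h, γ' h⟩)
    (hθ'K : ∀ k : K, θ' ⟨1, k⟩ = ⟨β' k, δ' k⟩) :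
    (∀ h : H, (θ'.comp θ) ⟨h, 1⟩ =
      ⟨α' (α h) * f (γ' (α h)) (β' (γ h)), γ' (α h) * δ' (γ h)⟩) ∧
    (∀ k : K, (θ'.comp θ) ⟨1, k⟩ =
      ⟨α' (β k) * f (γ' (β k)) (β' (δ k)), γ' (β k) * δ' (δ k)⟩) := by
  constructor
  · intro h
    simp only [MonoidHom.comp_apply, hθH, split_pair f (α h) (γ h), map_mul,
      hθ'H, hθ'K]
    rfl
  · intro k
    simp only [MonoidHom.comp_apply, hθK, split_pair f (β k) (δ k), map_mul,
      hθ'H, hθ'K]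
    rfl
end

section
/- Let θ be an endomorphism of G with matrix (α, β, γ, δ) such that α is bijective and Δ := det_K(θ) is bijective. Then θ is bijective, its inverse satisfies θ⁻¹(h,1) = (α'(h), γ'(h)) for all h ∈ H and θ⁻¹(1,k) = (β'(k), Δ⁻¹(k)) for all k ∈ K, where γ'(h) = Δ⁻¹((γ(α⁻¹(h)))⁻¹), β'(k) = (α⁻¹(β(Δ⁻¹(k))))⁻¹, and α'(h) = α⁻¹(h) · (α⁻¹(β(Δ⁻¹((γ(α⁻¹(h)))⁻¹))))⁻¹. Moreover, Δ is a group homomorphism: Δ(k·k') = Δ(k)·Δ(k') for all k, k' ∈ K. -/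
/-- Let `θ` be an endomorphism of `G = H ⋊[f] K` with matrix
`(α, β, γ, δ)` such that `α` is bijective (with two-sided inverse `αi`) and the
`K`-determinant `Δ k = (γ (αi (β k)))⁻¹ * δ k` is bijective (with two-sided inverse
`Δi`).  Then `θ` is bijective, its inverse has the stated matrix, and `Δ` is a
group homomorphism. -/
theorem bijective_of_detK_bijective
    {H K : Type*} [Group H] [Group K] (f : K →* MulAut H)
    (θ : (H ⋊[f] K) →* (H ⋊[f] K))
    (α : H → H) (β : K → H) (γ : H → K) (δ : K → K)
    (hθH : ∀ h : H, θ ⟨h, 1⟩ = ⟨α h, γ h⟩)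
    (hθK : ∀ k : K, θ ⟨1, k⟩ = ⟨β k, δ k⟩)
    (αi : H → H)
    (hαi : Function.LeftInverse αi α) (hαi' : Function.RightInverse αi α)
    (Δi : K → K)
    (hΔi : Function.LeftInverse Δi (fun k : K => (γ (αi (β k)))⁻¹ * δ k))
    (hΔi' : Function.RightInverse Δi (fun k : K => (γ (αi (β k)))⁻¹ * δ k)) :
    Function.Bijective θ ∧
    (∀ h : H, Function.invFun θ (⟨h, 1⟩ : H ⋊[f] K) =
      ⟨αi h * (αi (β (Δi ((γ (αi h))⁻¹))))⁻¹, Δi ((γ (αi h))⁻¹)⟩) ∧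
    (∀ k : K, Function.invFun θ (⟨1, k⟩ : H ⋊[f] K) =
      ⟨(αi (β (Δi k)))⁻¹, Δi k⟩) ∧
    (∀ k k' : K, (γ (αi (β (k * k'))))⁻¹ * δ (k * k') =
      ((γ (αi (β k)))⁻¹ * δ k) * ((γ (αi (β k')))⁻¹ * δ k')) := by
  have hmul : ∀ (h h' : H) (k k' : K),
      (⟨h, k⟩ * ⟨h', k'⟩ : H ⋊[f] K) = ⟨h * f k h', k * k'⟩ := fun _ _ _ _ => rfl
  have comp : ∀ {a b : H} {c d : K}, (⟨a, c⟩ : H ⋊[f] K) = ⟨b, d⟩ → a = b ∧ c = d :=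
    fun e => ⟨congrArg SemidirectProduct.left e, congrArg SemidirectProduct.right e⟩
  have hone : (1 : H ⋊[f] K) = ⟨1, 1⟩ := rfl
  have h11 : θ ⟨1, 1⟩ = ⟨1, 1⟩ := by rw [← hone, map_one]
  obtain ⟨hα1, hγ1⟩ := comp ((hθH 1).symm.trans h11)
  obtain ⟨hβ1, hδ1⟩ := comp ((hθK 1).symm.trans h11)
  have hαi1 : αi 1 = 1 := by have := hαi 1; rwa [hα1] at this
  -- product rules
  have hHmul : ∀ a b : H, α (a * b) = α a * f (γ a) (α b) ∧ γ (a * b) = γ a * γ b := by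
    intro a b
    have e : θ (⟨a, 1⟩ * ⟨b, 1⟩) = θ ⟨a, 1⟩ * θ ⟨b, 1⟩ := map_mul θ _ _
    have e2 : (⟨a, 1⟩ * ⟨b, 1⟩ : H ⋊[f] K) = ⟨a * b, 1⟩ := by rw [hmul]; simp
    rw [e2, hθH, hθH, hθH, hmul] at e
    exact comp e
  have hαm : ∀ a b : H, α (a * b) = α a * f (γ a) (α b) := fun a b => (hHmul a b).1
  have hγm : ∀ a b : H, γ (a * b) = γ a * γ b := fun a b => (hHmul a b).2
  have hKmul : ∀ k k' : K, β (k * k') = β k * f (δ k) (β k') ∧ δ (k * k') = δ k * δ k' := by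
    intro k k'
    have e : θ (⟨1, k⟩ * ⟨1, k'⟩) = θ ⟨1, k⟩ * θ ⟨1, k'⟩ := map_mul θ _ _
    have e2 : (⟨1, k⟩ * ⟨1, k'⟩ : H ⋊[f] K) = ⟨1, k * k'⟩ := by rw [hmul]; simp
    rw [e2, hθK, hθK, hθK, hmul] at e
    exact comp e
  have hβm : ∀ k k' : K, β (k * k') = β k * f (δ k) (β k') := fun k k' => (hKmul k k').1
  have hδm : ∀ k k' : K, δ (k * k') = δ k * δ k' := fun k k' => (hKmul k k').2
  -- mixed relations
  have hmix : ∀ (k : K) (h : H),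
      α (f k h) * f (γ (f k h)) (β k) = β k * f (δ k) (α h) ∧
      γ (f k h) * δ k = δ k * γ h := by
    intro k h
    have e1 : (⟨f k h, 1⟩ * ⟨1, k⟩ : H ⋊[f] K) = ⟨1, k⟩ * ⟨h, 1⟩ := by
      rw [hmul, hmul]; simp
    have e2 := congrArg θ e1
    rw [map_mul, map_mul, hθH, hθK, hθH, hmul, hmul] at e2
    exact comp e2
  have hγi : ∀ h : H, γ h⁻¹ = (γ h)⁻¹ := by
    intro h
    have e : γ h * γ h⁻¹ = 1 := by simpa [hγ1] using (hγm h h⁻¹).symm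
    exact (inv_eq_of_mul_eq_one_right e).symm
  -- general formula for θ
  have hθ : ∀ (h : H) (k : K), θ ⟨h, k⟩ = ⟨α h * f (γ h) (β k), γ h * δ k⟩ := by
    intro h k
    have e : (⟨h, k⟩ : H ⋊[f] K) = ⟨h, 1⟩ * ⟨1, k⟩ := by rw [hmul]; simp
    rw [e, map_mul, hθH, hθK, hmul]
  -- key preimage computations
  have keyHgen : ∀ (h' : H) (y : K) (u : H), α u = β y →
      (γ u)⁻¹ * δ y = (γ (αi h'))⁻¹ → θ ⟨αi h' * u⁻¹, y⟩ = ⟨h', 1⟩ := by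
    intro h' y u hu hdel
    rw [hθ]
    have l1 : α (αi h' * u⁻¹) * f (γ (αi h' * u⁻¹)) (β y) = h' := by
      rw [← hu, ← hαm, inv_mul_cancel_right, hαi']
    have l2 : γ (αi h' * u⁻¹) * δ y = 1 := by
      rw [hγm, hγi, mul_assoc, hdel]
      simp
    rw [l1, l2]
  have keyKgen : ∀ (k : K) (y : K) (u : H), α u = β y →
      (γ u)⁻¹ * δ y = k → θ ⟨u⁻¹, y⟩ = ⟨1, k⟩ := by
    intro k y u hu hdel
    rw [hθ]
    have l1 : α u⁻¹ * f (γ u⁻¹) (β y) = 1 := by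
      rw [← hu, ← hαm, inv_mul_cancel, hα1]
    have l2 : γ u⁻¹ * δ y = k := by rw [hγi]; exact hdel
    rw [l1, l2]
  have keyH : ∀ h : H,
      θ ⟨αi h * (αi (β (Δi ((γ (αi h))⁻¹))))⁻¹, Δi ((γ (αi h))⁻¹)⟩ = ⟨h, 1⟩ :=
    fun h => keyHgen h (Δi ((γ (αi h))⁻¹)) (αi (β (Δi ((γ (αi h))⁻¹))))
      (hαi' _) (hΔi' _)
  have keyK : ∀ k : K, θ ⟨(αi (β (Δi k)))⁻¹, Δi k⟩ = ⟨1, k⟩ :=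
    fun k => keyKgen k (Δi k) (αi (β (Δi k))) (hαi' _) (hΔi' _)
  -- injectivity
  have hinj : Function.Injective θ := by
    refine (injective_iff_map_eq_one θ).mpr ?_
    rintro ⟨x, y⟩ hg
    rw [hθ, hone] at hg
    obtain ⟨e1, e2⟩ := comp hg
    have hau : α (αi (β y)) = β y := hαi' _
    have exu : x * αi (β y) = 1 := hαi.injective (by rw [hαm, hau, e1, hα1])
    have hx : x = (αi (β y))⁻¹ := eq_inv_of_mul_eq_one_left exu
    have e2' : (γ (αi (β y)))⁻¹ * δ y = 1 := by
      rw [← hγi]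
      rw [hx] at e2
      exact e2
    have hΔ1 : (γ (αi (β (1 : K))))⁻¹ * δ (1 : K) = 1 := by
      rw [hβ1, hαi1, hγ1, hδ1]; simp
    have hy : y = 1 := hΔi.injective (e2'.trans hΔ1.symm)
    have hx1 : x = 1 := by rw [hx, hy, hβ1, hαi1, inv_one]
    rw [hone, hx1, hy]
  have hsurj : Function.Surjective θ := by
    rintro ⟨h, k⟩
    refine ⟨⟨αi h * (αi (β (Δi ((γ (αi h))⁻¹))))⁻¹, Δi ((γ (αi h))⁻¹)⟩ *
      ⟨(αi (β (Δi k)))⁻¹, Δi k⟩, ?_⟩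
    rw [map_mul, keyH, keyK, hmul]
    simp
  have hli := Function.leftInverse_invFun hinj
  refine ⟨⟨hinj, hsurj⟩, ?_, ?_, ?_⟩
  · intro h
    rw [← keyH h]
    exact hli _
  · intro k
    rw [← keyK k]
    exact hli _
  · intro k k'
    have hau : α (αi (β k)) = β k := hαi' _
    have hav : α (αi (β k')) = β k' := hαi' _
    have e1 : α (f k (αi (β k')) * αi (β k)) = β (k * k') := by
      rw [hαm, hau, (hmix k (αi (β k'))).1, hav, ← hβm]
    have e2 : αi (β (k * k')) = f k (αi (β k')) * αi (β k) := by
      rw [← e1, hαi]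
    have e3 : γ (f k (αi (β k'))) = δ k * γ (αi (β k')) * (δ k)⁻¹ :=
      eq_mul_inv_of_mul_eq (hmix k (αi (β k'))).2
    rw [e2, hγm, e3, hδm]
    group
end

section
/- Let θ be an endomorphism of G with matrix (α, β, γ, δ) such that α is bijective and Δ := det_K(θ) is bijective, so that θ is bijective and θ⁻¹ is an endomorphism of G whose matrix (α', β', γ', δ') has δ' = Δ⁻¹ bijective. Then the H-determinant of θ⁻¹ equals α⁻¹; that is, α'(h) · (β'(Δ(γ'(h))))⁻¹ = α⁻¹(h) for all h ∈ H. -/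
/-- Let `θ` be an endomorphism of `G = H ⋊[f] K` with matrix
`(α, β, γ, δ)` such that `α` is bijective (with two-sided inverse `αi`) and the
`K`-determinant `Δ k = (γ (αi (β k)))⁻¹ * δ k` is bijective, so that `θ` is
bijective with inverse the endomorphism `θ'` whose matrix is `(α', β', γ', δ')`
(and `δ' = Δ⁻¹` is bijective).  Then the `H`-determinant of `θ'` equals `α⁻¹`:
`α' h * (β' (Δ (γ' h)))⁻¹ = αi h` for all `h`. -/
theorem detH_of_inverse
    {H K : Type*} [Group H] [Group K] (f : K →* MulAut H)
    (θ θ' : (H ⋊[f] K) →* (H ⋊[f] K))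
    (hinv : Function.LeftInverse θ' θ) (hinv' : Function.RightInverse θ' θ)
    (α : H → H) (β : K → H) (γ : H → K) (δ : K → K)
    (hθH : ∀ h : H, θ ⟨h, 1⟩ = ⟨α h, γ h⟩)
    (hθK : ∀ k : K, θ ⟨1, k⟩ = ⟨β k, δ k⟩)
    (α' : H → H) (β' : K → H) (γ' : H → K) (δ' : K → K)
    (hθ'H : ∀ h : H, θ' ⟨h, 1⟩ = ⟨α' h, γ' h⟩)
    (hθ'K : ∀ k : K, θ' ⟨1, k⟩ = ⟨β' k, δ' k⟩)
    (αi : H → H)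
    (hαi : Function.LeftInverse αi α) (hαi' : Function.RightInverse αi α)
    (hΔ : Function.Bijective (fun k : K => (γ (αi (β k)))⁻¹ * δ k)) :
    ∀ h : H, α' h * (β' ((γ (αi (β (γ' h))))⁻¹ * δ (γ' h)))⁻¹ = αi h := by
  intro h
  set Δ : K → K := fun k : K => (γ (αi (β k)))⁻¹ * δ k with hΔdef
  -- behavior of θ on inverses of H-elements
  have hneg : ∀ x : H, θ ⟨x⁻¹, (1:K)⟩ = ⟨f (γ x)⁻¹ (α x)⁻¹, (γ x)⁻¹⟩ := by
    intro x
    have h1 : (⟨x, (1:K)⟩ : H ⋊[f] K)⁻¹ = ⟨x⁻¹, 1⟩ := by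
      ext <;> simp
    rw [← h1, map_inv, hθH]
    ext <;> simp
  -- θ (θ' ⟨1,k⟩) = ⟨1,k⟩ componentwise
  have hcomp : ∀ k : K, θ ⟨β' k, δ' k⟩
      = ⟨α (β' k) * f (γ (β' k)) (β (δ' k)), γ (β' k) * δ (δ' k)⟩ := by
    intro k
    have h1 : (⟨β' k, δ' k⟩ : H ⋊[f] K) = ⟨β' k, 1⟩ * ⟨1, δ' k⟩ := by
      ext <;> simp
    rw [h1, map_mul, hθH, hθK]
    ext <;> simp
  have hKeq : ∀ k : K,
      (⟨α (β' k) * f (γ (β' k)) (β (δ' k)), γ (β' k) * δ (δ' k)⟩ : H ⋊[f] K)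
        = ⟨1, k⟩ := by
    intro k
    rw [← hcomp, ← hθ'K, hinv' _]
  have hAk : ∀ k : K, α (β' k) * f (γ (β' k)) (β (δ' k)) = 1 :=
    fun k => congrArg SemidirectProduct.left (hKeq k)
  have hBk : ∀ k : K, γ (β' k) * δ (δ' k) = k :=
    fun k => congrArg SemidirectProduct.right (hKeq k)
  -- β (δ' k) = α ((β' k)⁻¹)
  have hβδ' : ∀ k : K, β (δ' k) = α ((β' k)⁻¹) := by
    intro k
    have h2 : f (γ (β' k)) (β (δ' k)) = (α (β' k))⁻¹ :=
      eq_inv_of_mul_eq_one_right (hAk k)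
    have h3 : β (δ' k) = f (γ (β' k))⁻¹ (α (β' k))⁻¹ := by
      have := congrArg (⇑(f (γ (β' k)))⁻¹) h2
      simpa using this
    have h4 := hneg (β' k)
    rw [hθH] at h4
    have h5 : α ((β' k)⁻¹) = f (γ (β' k))⁻¹ (α (β' k))⁻¹ :=
      congrArg SemidirectProduct.left h4
    rw [h3, h5]
  have hγβ' : ∀ k : K, γ ((β' k)⁻¹) = (γ (β' k))⁻¹ := by
    intro k
    have h4 := hneg (β' k)
    rw [hθH] at h4
    exact congrArg SemidirectProduct.right h4
  -- Δ ∘ δ' = id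
  have hΔδ' : ∀ k : K, Δ (δ' k) = k := by
    intro k
    have h1 : αi (β (δ' k)) = (β' k)⁻¹ := by rw [hβδ']; exact hαi _
    simp only [hΔdef, h1, hγβ' k, inv_inv]
    exact hBk k
  have hδ'Δ : δ' (Δ (γ' h)) = γ' h := hΔ.injective (hΔδ' (Δ (γ' h)))
  -- compute θ' ⟨h, (Δ (γ' h))⁻¹⟩
  set k₁ := Δ (γ' h) with hk₁
  have hsplit : (⟨h, k₁⁻¹⟩ : H ⋊[f] K) = ⟨h, 1⟩ * (⟨1, k₁⟩ : H ⋊[f] K)⁻¹ := by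
    ext <;> simp
  have hθ'val : θ' ⟨h, k₁⁻¹⟩ = ⟨α' h * (β' k₁)⁻¹, 1⟩ := by
    rw [hsplit, map_mul, map_inv, hθ'H, hθ'K, hδ'Δ]
    ext <;> simp
  have hfin := hinv' (⟨h, k₁⁻¹⟩ : H ⋊[f] K)
  rw [hθ'val, hθH] at hfin
  have hαL : α (α' h * (β' k₁)⁻¹) = h := congrArg SemidirectProduct.left hfin
  have := congrArg αi hαL
  rw [hαi] at this
  rw [hk₁, hΔdef] at this
  exact this
end

section
/- Let θ be an endomorphism of G with matrix (α, β, γ, δ) such that δ is bijective and Δ := det_H(θ) is bijective, so that θ is bijective and θ⁻¹ is an endomorphism of G whose matrix (α', β', γ', δ') has α' = Δ⁻¹ bijective. Then the K-determinant of θ⁻¹ equals δ⁻¹; that is, (γ'(Δ(β'(k))))⁻¹ · δ'(k) = δ⁻¹(k) for all k ∈ K. -/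
/-- Let `θ` be an endomorphism of `G = H ⋊[f] K` with matrix
`(α, β, γ, δ)` such that `δ` is bijective (with two-sided inverse `δi`) and the
`H`-determinant `Δ h = α h * (β (δi (γ h)))⁻¹` is bijective, so that `θ` is
bijective with inverse the endomorphism `θ'` whose matrix is `(α', β', γ', δ')`
(and `α' = Δ⁻¹` is bijective).  Then the `K`-determinant of `θ'` equals `δ⁻¹`:
`(γ' (Δ (β' k)))⁻¹ * δ' k = δi k` for all `k`. -/
theorem detK_of_inverse
    {H K : Type*} [Group H] [Group K] (f : K →* MulAut H)
    (θ θ' : (H ⋊[f] K) →* (H ⋊[f] K))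
    (hinv : Function.LeftInverse θ' θ) (hinv' : Function.RightInverse θ' θ)
    (α : H → H) (β : K → H) (γ : H → K) (δ : K → K)
    (hθH : ∀ h : H, θ ⟨h, 1⟩ = ⟨α h, γ h⟩)
    (hθK : ∀ k : K, θ ⟨1, k⟩ = ⟨β k, δ k⟩)
    (α' : H → H) (β' : K → H) (γ' : H → K) (δ' : K → K)
    (hθ'H : ∀ h : H, θ' ⟨h, 1⟩ = ⟨α' h, γ' h⟩)
    (hθ'K : ∀ k : K, θ' ⟨1, k⟩ = ⟨β' k, δ' k⟩)
    (δi : K → K)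
    (hδi : Function.LeftInverse δi δ) (hδi' : Function.RightInverse δi δ)
    (hΔ : Function.Bijective (fun h : H => α h * (β (δi (γ h)))⁻¹)) :
    ∀ k : K, (γ' (α (β' k) * (β (δi (γ (β' k))))⁻¹))⁻¹ * δ' k = δi k := by
  intro k
  have hmul : ∀ (h₁ h₂ : H) (k₁ k₂ : K),
      (⟨h₁, k₁⟩ * ⟨h₂, k₂⟩ : H ⋊[f] K) = ⟨h₁ * f k₁ h₂, k₁ * k₂⟩ := fun _ _ _ _ => rfl
  -- δ is multiplicative
  have hδmul : ∀ k₁ k₂ : K, δ (k₁ * k₂) = δ k₁ * δ k₂ := by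
    intro k₁ k₂
    have h1 : (⟨1, k₁⟩ * ⟨1, k₂⟩ : H ⋊[f] K) = ⟨1, k₁ * k₂⟩ := by
      rw [hmul]; simp
    have h2 := θ.map_mul ⟨1, k₁⟩ ⟨1, k₂⟩
    rw [h1, hθK, hθK, hθK, hmul] at h2
    exact congrArg SemidirectProduct.right h2
  -- K-component of θ (θ' ⟨1,k⟩) = ⟨1,k⟩
  have hK : γ (β' k) * δ (δ' k) = k := by
    have h2 : θ ⟨β' k, δ' k⟩ = ⟨1, k⟩ := by rw [← hθ'K]; exact hinv' _
    have hsplit : (⟨β' k, δ' k⟩ : H ⋊[f] K) = ⟨β' k, 1⟩ * ⟨1, δ' k⟩ := by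
      rw [hmul]; simp
    rw [hsplit, θ.map_mul, hθH, hθK, hmul] at h2
    exact congrArg SemidirectProduct.right h2
  -- γ' of Δ h
  set h : H := β' k with hh
  have hx : θ (⟨h, (δi (γ h))⁻¹⟩ : H ⋊[f] K) = ⟨α h * (β (δi (γ h)))⁻¹, 1⟩ := by
    have hsplit : (⟨h, (δi (γ h))⁻¹⟩ : H ⋊[f] K) = ⟨h, 1⟩ * (⟨1, δi (γ h)⟩)⁻¹ := by
      have : ((⟨1, δi (γ h)⟩ : H ⋊[f] K))⁻¹ = ⟨1, (δi (γ h))⁻¹⟩ := by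
        ext <;> simp [SemidirectProduct.inv_left, SemidirectProduct.inv_right]
      rw [this, hmul]; simp
    rw [hsplit, θ.map_mul, θ.map_inv, hθH, hθK, hδi']
    ext
    · simp [SemidirectProduct.mul_left, SemidirectProduct.inv_left,
        SemidirectProduct.inv_right]
    · simp [SemidirectProduct.mul_right, SemidirectProduct.inv_right]
  have hγ' : γ' (α h * (β (δi (γ h)))⁻¹) = (δi (γ h))⁻¹ := by
    have h3 : θ' ⟨α h * (β (δi (γ h)))⁻¹, 1⟩ = ⟨h, (δi (γ h))⁻¹⟩ := by
      rw [← hx]; exact hinv _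
    rw [hθ'H] at h3
    exact congrArg SemidirectProduct.right h3
  rw [hγ', inv_inv]
  -- conclude via injectivity of δ
  apply hδi.injective
  rw [hδmul, hδi', hK, hδi']
end

section
/- Let θ be an endomorphism of G with matrix (α, β, γ, δ) such that α is bijective. Then θ is bijective if and only if det_K(θ) is bijective. -/
/-- Let `θ` be an endomorphism of `G = H ⋊[f] K` with matrix
`(α, β, γ, δ)` such that `α` is bijective (with two-sided inverse `αi`).  Then `θ`
is bijective if and only if the `K`-determinant `det_K θ : k ↦ (γ (αi (β k)))⁻¹ * δ k`
is bijective. -/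
theorem bijective_iff_detK_bijective
    {H K : Type*} [Group H] [Group K] (f : K →* MulAut H)
    (θ : (H ⋊[f] K) →* (H ⋊[f] K))
    (α : H → H) (β : K → H) (γ : H → K) (δ : K → K)
    (hθH : ∀ h : H, θ ⟨h, 1⟩ = ⟨α h, γ h⟩)
    (hθK : ∀ k : K, θ ⟨1, k⟩ = ⟨β k, δ k⟩)
    (αi : H → H)
    (hαi : Function.LeftInverse αi α) (hαi' : Function.RightInverse αi α) :
    Function.Bijective θ ↔
      Function.Bijective (fun k : K => (γ (αi (β k)))⁻¹ * δ k) := by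
  set d : K → K := fun k => (γ (αi (β k)))⁻¹ * δ k with hd
  have hαbij : Function.Bijective α := ⟨hαi.injective, hαi'.surjective⟩
  have key : ∀ h k, θ ⟨h, k⟩ = ⟨α (h * αi (β k)), γ (h * αi (β k)) * d k⟩ := by
    intro h k
    have h1 : (⟨h, k⟩ : H ⋊[f] K) = ⟨h, 1⟩ * ⟨1, k⟩ := by ext <;> simp
    have h2 : (⟨β k, δ k⟩ : H ⋊[f] K) = ⟨β k, γ (αi (β k))⟩ * ⟨1, d k⟩ := by
      ext <;> simp [hd]
    have h3 : θ (⟨1, k⟩ : H ⋊[f] K) = θ ⟨αi (β k), 1⟩ * ⟨1, d k⟩ := by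
      rw [hθK, hθH, hαi' (β k)]; exact h2
    calc θ ⟨h, k⟩ = θ ⟨h, 1⟩ * θ ⟨1, k⟩ := by rw [← map_mul, ← h1]
    _ = θ ⟨h, 1⟩ * (θ ⟨αi (β k), 1⟩ * ⟨1, d k⟩) := by rw [h3]
    _ = θ (⟨h, 1⟩ * ⟨αi (β k), 1⟩) * ⟨1, d k⟩ := by rw [map_mul, mul_assoc]
    _ = θ ⟨h * αi (β k), 1⟩ * ⟨1, d k⟩ := by
        congr 2; ext <;> simp
    _ = ⟨α (h * αi (β k)), γ (h * αi (β k)) * d k⟩ := by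
        rw [hθH]; ext <;> simp
  let Q : (H ⋊[f] K) ≃ (H ⋊[f] K) :=
    { toFun := fun g => ⟨g.left * αi (β g.right), g.right⟩
      invFun := fun g => ⟨g.left * (αi (β g.right))⁻¹, g.right⟩
      left_inv := fun g => by ext <;> simp
      right_inv := fun g => by ext <;> simp }
  let R : (H ⋊[f] K) ≃ (H ⋊[f] K) :=
    { toFun := fun g => ⟨g.left, γ (αi g.left) * g.right⟩
      invFun := fun g => ⟨g.left, (γ (αi g.left))⁻¹ * g.right⟩
      left_inv := fun g => by ext <;> simp
      right_inv := fun g => by ext <;> simp }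
  let M : (H ⋊[f] K) → (H ⋊[f] K) := fun g => ⟨α g.left, d g.right⟩
  have hθfun : (θ : (H ⋊[f] K) → (H ⋊[f] K)) = R ∘ M ∘ Q := by
    funext g
    cases g with
    | mk h k =>
      rw [key h k]
      show _ = (⟨_, _⟩ : H ⋊[f] K)
      simp [M, Q, R, hαi (h * αi (β k))]
  have hMbij : Function.Bijective M ↔ Function.Bijective d := by
    constructor
    · intro hM
      constructor
      · intro k k' hk
        have h1 : M ⟨1, k⟩ = M ⟨1, k'⟩ := by
          show (⟨_, _⟩ : H ⋊[f] K) = ⟨_, _⟩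
          rw [hk]
        exact congrArg SemidirectProduct.right (hM.1 h1)
      · intro k
        obtain ⟨g, hg⟩ := hM.2 ⟨1, k⟩
        exact ⟨g.right, congrArg SemidirectProduct.right hg⟩
    · intro hdbij
      constructor
      · intro g g' hg
        ext
        · exact hαbij.1 (congrArg SemidirectProduct.left hg)
        · exact hdbij.1 (congrArg SemidirectProduct.right hg)
      · intro g
        obtain ⟨h, hh⟩ := hαbij.2 g.left
        obtain ⟨k, hk⟩ := hdbij.2 g.right
        refine ⟨⟨h, k⟩, ?_⟩
        show (⟨α h, d k⟩ : H ⋊[f] K) = g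
        rw [hh, hk]
  rw [show Function.Bijective θ ↔ Function.Bijective (R ∘ M ∘ Q) from by rw [hθfun]]
  rw [Function.Bijective.of_comp_iff' R.bijective (M ∘ Q),
      Function.Bijective.of_comp_iff _ Q.bijective]
  exact hMbij
end

section
/- Let θ be an endomorphism of G with matrix (α, β, γ, δ) such that δ is bijective. Then θ is bijective if and only if det_H(θ) is bijective. -/
/-- Let `θ` be an endomorphism of `G = H ⋊[f] K` with matrix
`(α, β, γ, δ)` such that `δ` is bijective (with two-sided inverse `δi`).  Then `θ`
is bijective if and only if the `H`-determinant `det_H θ : h ↦ α h * (β (δi (γ h)))⁻¹`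
is bijective. -/
theorem bijective_iff_detH_bijective
    {H K : Type*} [Group H] [Group K] (f : K →* MulAut H)
    (θ : (H ⋊[f] K) →* (H ⋊[f] K))
    (α : H → H) (β : K → H) (γ : H → K) (δ : K → K)
    (hθH : ∀ h : H, θ ⟨h, 1⟩ = ⟨α h, γ h⟩)
    (hθK : ∀ k : K, θ ⟨1, k⟩ = ⟨β k, δ k⟩)
    (δi : K → K)
    (hδi : Function.LeftInverse δi δ) (hδi' : Function.RightInverse δi δ) :
    Function.Bijective θ ↔
      Function.Bijective (fun h : H => α h * (β (δi (γ h)))⁻¹) := by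
  have hθ : ∀ (h : H) (k : K), θ ⟨h, k⟩ = ⟨α h * f (γ h) (β k), γ h * δ k⟩ := by
    intro h k
    have hmk : (⟨h, k⟩ : H ⋊[f] K) = ⟨h, 1⟩ * ⟨1, k⟩ := by ext <;> simp
    rw [hmk, map_mul, hθH, hθK]
    ext <;> simp
  have hkk : ∀ k₁ k₂ : K, θ ⟨1, k₁ * k₂⟩ = θ ⟨1, k₁⟩ * θ ⟨1, k₂⟩ := by
    intro k₁ k₂
    rw [← map_mul]; congr 1; ext <;> simp
  have hδmul : ∀ k₁ k₂ : K, δ (k₁ * k₂) = δ k₁ * δ k₂ := by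
    intro k₁ k₂
    have h := hkk k₁ k₂
    rw [hθK, hθK, hθK] at h
    simpa using congrArg SemidirectProduct.right h
  have hβcoc : ∀ k₁ k₂ : K, β (k₁ * k₂) = β k₁ * f (δ k₁) (β k₂) := by
    intro k₁ k₂
    have h := hkk k₁ k₂
    rw [hθK, hθK, hθK] at h
    simpa using congrArg SemidirectProduct.left h
  set D : H → H := fun h => α h * (β (δi (γ h)))⁻¹ with hD
  have key : ∀ (h : H) (k : K),
      α h * f (γ h) (β k) = D h * β (δi (γ h * δ k)) := by
    intro h k
    have h1 : δi (γ h * δ k) = δi (γ h) * k := by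
      apply hδi.injective
      rw [hδi', hδmul, hδi']
    have h2 : β (δi (γ h) * k) = β (δi (γ h)) * f (γ h) (β k) := by
      rw [hβcoc, hδi']
    rw [h1, h2, hD]
    group
  let E : H × K ≃ (H ⋊[f] K) :=
    { toFun := fun p => ⟨p.1, p.2⟩
      invFun := fun g => (g.left, g.right)
      left_inv := fun p => rfl
      right_inv := fun g => rfl }
  let Q : (H ⋊[f] K) ≃ H × K :=
    { toFun := fun g => (g.left, γ g.left * δ g.right)
      invFun := fun p => ⟨p.1, δi ((γ p.1)⁻¹ * p.2)⟩
      left_inv := by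
        intro g
        ext
        · rfl
        · show δi ((γ g.left)⁻¹ * (γ g.left * δ g.right)) = g.right
          rw [inv_mul_cancel_left, hδi]
      right_inv := by
        intro p
        ext
        · rfl
        · show γ p.1 * δ (δi ((γ p.1)⁻¹ * p.2)) = p.2
          rw [hδi', mul_inv_cancel_left] }
  let M : H × K ≃ H × K :=
    { toFun := fun p => (p.1 * β (δi p.2), p.2)
      invFun := fun p => (p.1 * (β (δi p.2))⁻¹, p.2)
      left_inv := by intro p; simp
      right_inv := by intro p; simp }
  have hfact : (θ : H ⋊[f] K → H ⋊[f] K) = E ∘ (M ∘ Prod.map D id) ∘ Q := by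
    funext g
    show θ g = E (M (Prod.map D id (Q g)))
    obtain ⟨h, k⟩ := g
    show θ ⟨h, k⟩ = E (M (D h, γ h * δ k))
    rw [hθ, key]
    rfl
  have step1 : Function.Bijective θ ↔ Function.Bijective (M ∘ Prod.map D id) := by
    rw [show (Function.Bijective θ ↔ _) from Iff.rfl, hfact]
    rw [Equiv.comp_bijective, Equiv.bijective_comp]
  rw [step1, Equiv.comp_bijective, Prod.map_bijective]
  exact ⟨fun hb => hb.1, fun hb => ⟨hb, Function.bijective_id⟩⟩
end

section
/- Let θ be an endomorphism of G satisfying θ(h,1) = (h, γ(h)) for all h ∈ H and θ(1,k) = (β(k), k) for all k ∈ K, where β : K → H and γ : H → K. Then β(k) lies in the center Z(H) of H for every k ∈ K. -/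
/-- Let `θ` be an endomorphism of `G = H ⋊[f] K` with
`θ (h, 1) = (h, γ h)` and `θ (1, k) = (β k, k)`.  Then `β` takes values in the
center of `H`. -/
theorem beta_mem_center
    {H K : Type*} [Group H] [Group K] (f : K →* MulAut H)
    (θ : (H ⋊[f] K) →* (H ⋊[f] K))
    (β : K → H) (γ : H → K)
    (hθH : ∀ h : H, θ ⟨h, 1⟩ = ⟨h, γ h⟩)
    (hθK : ∀ k : K, θ ⟨1, k⟩ = ⟨β k, k⟩) :
    ∀ k : K, β k ∈ Subgroup.center H := by
  have hfix : ∀ h h' : H, f (γ h) h' = h' := by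
    intro h h'
    have e : θ (⟨h, 1⟩ * ⟨h', 1⟩) = θ (⟨h * h', 1⟩ : H ⋊[f] K) := by
      congr 1
      ext <;> simp [SemidirectProduct.mul_left, SemidirectProduct.mul_right]
    rw [map_mul, hθH, hθH, hθH] at e
    have := congrArg SemidirectProduct.left e
    simpa [SemidirectProduct.mul_left] using this
  intro k
  rw [Subgroup.mem_center_iff]
  intro h
  have e : θ (⟨h, 1⟩ * ⟨1, k⟩) = θ (⟨1, k⟩ * ⟨f k⁻¹ h, 1⟩) := by
    congr 1
    ext <;> simp [SemidirectProduct.mul_left, SemidirectProduct.mul_right]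
  rw [map_mul, map_mul, hθH, hθK, hθH] at e
  have := congrArg SemidirectProduct.left e
  simpa [SemidirectProduct.mul_left, hfix] using this
end

section
/- Let θ be an endomorphism of G satisfying θ(h,1) = (h, γ(h)) for all h ∈ H and θ(1,k) = (β(k), k) for all k ∈ K, where β : K → H and γ : H → K. Then the composite map h ↦ β(γ(h)) is a group endomorphism of H: β(γ(h·h')) = β(γ(h)) · β(γ(h')) for all h, h' ∈ H. -/
/-- Let `θ` be an endomorphism of `G = H ⋊[f] K` with
`θ (h, 1) = (h, γ h)` and `θ (1, k) = (β k, k)`.  Then `β ∘ γ` is a group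
endomorphism of `H`. -/
theorem betaGamma_hom
    {H K : Type*} [Group H] [Group K] (f : K →* MulAut H)
    (θ : (H ⋊[f] K) →* (H ⋊[f] K))
    (β : K → H) (γ : H → K)
    (hθH : ∀ h : H, θ ⟨h, 1⟩ = ⟨h, γ h⟩)
    (hθK : ∀ k : K, θ ⟨1, k⟩ = ⟨β k, k⟩) :
    ∀ h h' : H, β (γ (h * h')) = β (γ h) * β (γ h') := by
  have hmulH : ∀ a b : H, (⟨a, 1⟩ * ⟨b, 1⟩ : H ⋊[f] K) = ⟨a * b, 1⟩ := by
    intro a b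
    ext <;> simp
  -- key facts from θ on H-part
  have key : ∀ a b : H, (f (γ a) b = b) ∧ γ (a * b) = γ a * γ b := by
    intro a b
    have := θ.map_mul ⟨a, 1⟩ ⟨b, 1⟩
    rw [hmulH, hθH, hθH, hθH] at this
    have hl := congrArg SemidirectProduct.left this
    have hr := congrArg SemidirectProduct.right this
    simp at hl hr
    exact ⟨hl.symm, hr⟩
  have hβ : ∀ k k' : K, β (k * k') = β k * f k (β k') := by
    intro k k'
    have hmulK : (⟨1, k⟩ * ⟨1, k'⟩ : H ⋊[f] K) = ⟨1, k * k'⟩ := by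
      ext <;> simp
    have := θ.map_mul ⟨1, k⟩ ⟨1, k'⟩
    rw [hmulK, hθK, hθK, hθK] at this
    have hl := congrArg SemidirectProduct.left this
    simp at hl
    exact hl
  intro h h'
  rw [(key h h').2, hβ, (key h _).1]
end

section
/- Let θ be an endomorphism of G satisfying θ(h,1) = (h, γ(h)) for all h ∈ H and θ(1,k) = (β(k), k) for all k ∈ K, where β : K → H and γ : H → K. Then the composite h ↦ β(γ(h)) is equivariant for the action of K: β(γ(f_k(h))) = f_k(β(γ(h))) for all h ∈ H and k ∈ K. -/
/-- Let `θ` be an endomorphism of `G = H ⋊[f] K` with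
`θ (h, 1) = (h, γ h)` and `θ (1, k) = (β k, k)`.  Then `β ∘ γ` is equivariant
for the action of `K` on `H`: `β (γ (f k h)) = f k (β (γ h))`. -/
theorem betaGamma_equivariant
    {H K : Type*} [Group H] [Group K] (f : K →* MulAut H)
    (θ : (H ⋊[f] K) →* (H ⋊[f] K))
    (β : K → H) (γ : H → K)
    (hθH : ∀ h : H, θ ⟨h, 1⟩ = ⟨h, γ h⟩)
    (hθK : ∀ k : K, θ ⟨1, k⟩ = ⟨β k, k⟩) :
    ∀ (h : H) (k : K), β (γ (f k h)) = f k (β (γ h)) := by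
  intro h k
  have mulmk : ∀ (h₁ h₂ : H) (k₁ k₂ : K),
      (⟨h₁, k₁⟩ : H ⋊[f] K) * ⟨h₂, k₂⟩ = ⟨h₁ * f k₁ h₂, k₁ * k₂⟩ := fun _ _ _ _ => rfl
  -- β is a crossed homomorphism
  have hβ : ∀ k₁ k₂ : K, β (k₁ * k₂) = β k₁ * f k₁ (β k₂) := by
    intro k₁ k₂
    have := map_mul θ ⟨1, k₁⟩ ⟨1, k₂⟩
    rw [mulmk] at this
    simp only [map_one, MulAut.one_apply, one_mul] at this
    rw [hθK, hθK, hθK, mulmk] at this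
    have := congrArg SemidirectProduct.left this
    simpa using this
  -- f (γ h) acts trivially
  have hγtriv : ∀ h₁ h₂ : H, f (γ h₁) h₂ = h₂ := by
    intro h₁ h₂
    have := map_mul θ ⟨h₁, 1⟩ ⟨h₂, 1⟩
    rw [mulmk, map_one, mul_one] at this
    simp only [MulAut.one_apply] at this
    rw [hθH, hθH, hθH, mulmk] at this
    have := congrArg SemidirectProduct.left this
    simpa using this.symm
  -- θ of (f k h', k) computed two ways, for any h'
  have key : ∀ h' : H, (⟨f k h' * f (γ (f k h')) (β k), γ (f k h') * k⟩ : H ⋊[f] K)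
      = ⟨β k * f k h', k * γ h'⟩ := by
    intro h'
    have hmulid : (⟨f k h', 1⟩ : H ⋊[f] K) * ⟨1, k⟩ = ⟨1, k⟩ * ⟨h', 1⟩ := by
      rw [mulmk, mulmk]
      simp
    have this2 : θ ⟨f k h', 1⟩ * θ ⟨1, k⟩ = θ ⟨1, k⟩ * θ ⟨h', 1⟩ := by
      rw [← map_mul, ← map_mul, hmulid]
    rw [hθH, hθK, hθH, mulmk, mulmk] at this2
    exact this2
  -- β k commutes with everything in the range of f k
  have hcomm : ∀ h' : H, f k h' * β k = β k * f k h' := by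
    intro h'
    have := congrArg SemidirectProduct.left (key h')
    rw [hγtriv] at this
    simpa using this
  -- γ (f k h) = k * γ h * k⁻¹
  have hγ : γ (f k h) = k * γ h * k⁻¹ := by
    have := congrArg SemidirectProduct.right (key h)
    simp only at this
    rw [eq_mul_inv_iff_mul_eq]
    exact this
  have hβone : β 1 = 1 := by
    have := hθK 1
    rw [show (⟨(1 : H), (1 : K)⟩ : H ⋊[f] K) = 1 from rfl, map_one] at this
    have := congrArg SemidirectProduct.left this
    simpa using this.symm
  have hβinv : f k (β k⁻¹) = (β k)⁻¹ := by
    have := hβ k k⁻¹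
    rw [mul_inv_cancel, hβone] at this
    rw [eq_comm, inv_eq_iff_mul_eq_one, this]
  calc β (γ (f k h)) = β (k * γ h * k⁻¹) := by rw [hγ]
    _ = β k * f k (β (γ h * k⁻¹)) := by rw [mul_assoc, hβ]
    _ = β k * f k (β (γ h) * f (γ h) (β k⁻¹)) := by rw [hβ]
    _ = β k * (f k (β (γ h)) * f k (β k⁻¹)) := by rw [hγtriv, map_mul]
    _ = β k * (f k (β (γ h)) * (β k)⁻¹) := by rw [hβinv]
    _ = f k (β (γ h)) := by
        rw [← mul_assoc, ← hcomm, mul_assoc, mul_inv_cancel, mul_one]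
end

section
/- Let θ be a bijective endomorphism (automorphism) of G satisfying θ(h,1) = (h, γ(h)) for all h ∈ H and θ(1,k) = (β(k), k) for all k ∈ K, where β : K → H and γ : H → K. Then the map η : H → H defined by η(h) = h · (β(γ(h)))⁻¹ is a bijective group homomorphism of H, and it is equivariant for the action of K: η(f_k(h)) = f_k(η(h)) for all h ∈ H and k ∈ K. -/
/-- Let `θ` be a bijective endomorphism (automorphism) of
`G = H ⋊[f] K` with `θ (h, 1) = (h, γ h)` and `θ (1, k) = (β k, k)`.  Then the map
`η : h ↦ h * (β (γ h))⁻¹` is a bijective group homomorphism of `H` and is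
equivariant for the action of `K`. -/
theorem eta_bijective_hom_equivariant
    {H K : Type*} [Group H] [Group K] (f : K →* MulAut H)
    (θ : (H ⋊[f] K) →* (H ⋊[f] K))
    (hθ : Function.Bijective θ)
    (β : K → H) (γ : H → K)
    (hθH : ∀ h : H, θ ⟨h, 1⟩ = ⟨h, γ h⟩)
    (hθK : ∀ k : K, θ ⟨1, k⟩ = ⟨β k, k⟩) :
    Function.Bijective (fun h : H => h * (β (γ h))⁻¹) ∧
    (∀ h h' : H, (h * h') * (β (γ (h * h')))⁻¹ =
      (h * (β (γ h))⁻¹) * (h' * (β (γ h'))⁻¹)) ∧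
    (∀ (h : H) (k : K), f k h * (β (γ (f k h)))⁻¹ = f k (h * (β (γ h))⁻¹)) := by
  have mk_mul : ∀ (h h' : H) (k k' : K),
      (⟨h, k⟩ : H ⋊[f] K) * ⟨h', k'⟩ = ⟨h * f k h', k * k'⟩ := fun _ _ _ _ => rfl
  -- β 1 = 1
  have hβ1 : β 1 = 1 := by
    have := hθK 1
    rw [show (⟨1, 1⟩ : H ⋊[f] K) = 1 from rfl, map_one] at this
    exact (congrArg SemidirectProduct.left this.symm)
  -- trivial action of γ-image and γ is a hom
  have keyHH : ∀ h h' : H, f (γ h) h' = h' ∧ γ (h * h') = γ h * γ h' := by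
    intro h h'
    have e := map_mul θ ⟨h, 1⟩ ⟨h', 1⟩
    rw [mk_mul, map_one, MulAut.one_apply, mul_one, hθH, hθH, hθH, mk_mul] at e
    have e1 := congrArg SemidirectProduct.left e
    have e2 := congrArg SemidirectProduct.right e
    simp only at e1 e2
    exact ⟨(mul_left_cancel e1).symm, e2⟩
  have htriv : ∀ (h : H) (a : H), f (γ h) a = a := fun h a => (keyHH h a).1
  have hγmul : ∀ h h' : H, γ (h * h') = γ h * γ h' := fun h h' => (keyHH h h').2
  -- β is a crossed homomorphism
  have hβmul : ∀ k k' : K, β (k * k') = β k * f k (β k') := by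
    intro k k'
    have e := map_mul θ ⟨1, k⟩ ⟨1, k'⟩
    rw [mk_mul, map_one, mul_one, hθK, hθK, hθK, mk_mul] at e
    exact congrArg SemidirectProduct.left e
  -- mixed relation: centrality of β-image and conjugation rule for γ
  have keyMix : ∀ (k : K) (h : H), f k h * β k = β k * f k h ∧
      γ (f k h) * k = k * γ h := by
    intro k h
    have e1 := map_mul θ ⟨1, k⟩ ⟨h, 1⟩
    have e2 := map_mul θ ⟨f k h, 1⟩ ⟨1, k⟩
    simp only [mk_mul, mul_one, one_mul, map_one, MulAut.one_apply, hθH, hθK] at e1 e2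
    rw [htriv (f k h) (β k)] at e2
    have e := e2.symm.trans e1
    exact ⟨congrArg SemidirectProduct.left e, congrArg SemidirectProduct.right e⟩
  have hcentral : ∀ (k : K) (a : H), a * β k = β k * a := by
    intro k a
    have := (keyMix k ((f k).symm a)).1
    rwa [MulEquiv.apply_symm_apply] at this
  have hγconj : ∀ (k : K) (h : H), γ (f k h) = k * γ h * k⁻¹ := fun k h =>
    eq_mul_inv_iff_mul_eq.mpr (keyMix k h).2
  -- β of inverse
  have hβinvk : ∀ k : K, f k (β k⁻¹) = (β k)⁻¹ := by
    intro k
    have := hβmul k k⁻¹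
    rw [mul_inv_cancel, hβ1] at this
    rw [eq_comm, inv_eq_iff_mul_eq_one, ← this]
  -- homomorphism property of η
  have hom : ∀ h h' : H, (h * h') * (β (γ (h * h')))⁻¹ =
      (h * (β (γ h))⁻¹) * (h' * (β (γ h'))⁻¹) := by
    intro h h'
    rw [hγmul, hβmul, htriv, mul_inv_rev]
    have c1 : Commute (β (γ h))⁻¹ (h' * (β (γ h'))⁻¹) :=
      (Commute.symm (hcentral (γ h) (h' * (β (γ h'))⁻¹))).inv_left
    rw [mul_assoc, mul_assoc, c1.eq, mul_assoc]
  refine ⟨⟨?_, ?_⟩, hom, ?_⟩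
  · -- injective
    set η : H →* H := MonoidHom.mk' (fun h => h * (β (γ h))⁻¹) hom with hη
    have : Function.Injective η := (injective_iff_map_eq_one η).mpr (by
      intro h hh1
      have hbg : h = β (γ h) := by
        have : h * (β (γ h))⁻¹ = 1 := hh1
        rwa [mul_inv_eq_one] at this
      have heq : θ ⟨h, 1⟩ = θ ⟨1, γ h⟩ := by rw [hθH, hθK, ← hbg]
      exact congrArg SemidirectProduct.left (hθ.1 heq))
    exact this
  · -- surjective
    intro a
    obtain ⟨⟨h, k⟩, hx⟩ := hθ.2 ⟨a, 1⟩
    have hsplit : (⟨h, k⟩ : H ⋊[f] K) = ⟨h, 1⟩ * ⟨1, k⟩ := by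
      rw [mk_mul]; simp
    rw [hsplit, map_mul, hθH, hθK, mk_mul, htriv] at hx
    have hL := congrArg SemidirectProduct.left hx
    have hR := congrArg SemidirectProduct.right hx
    simp only at hL hR
    have hk : k = (γ h)⁻¹ := by
      have := congrArg (fun x => (γ h)⁻¹ * x) hR
      simpa [← mul_assoc] using this
    refine ⟨h, ?_⟩
    simp only
    rw [← hL, hk]
    congr 1
    have h1 : f (γ h) (β (γ h)⁻¹) = (β (γ h))⁻¹ := hβinvk (γ h)
    rw [htriv h (β (γ h)⁻¹)] at h1
    exact h1.symm
  · -- equivariance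
    intro h k
    have hβc : β (k * γ h * k⁻¹) = f k (β (γ h)) := by
      rw [hβmul (k * γ h) k⁻¹, hβmul k (γ h)]
      have h1 : f (k * γ h) (β k⁻¹) = (β k)⁻¹ := by
        rw [map_mul f, MulAut.mul_apply, htriv h (β k⁻¹), hβinvk]
      rw [h1, ← hcentral k (f k (β (γ h))), mul_inv_cancel_right]
    rw [hγconj, hβc, map_mul, map_inv]
end

section
/- Let θ be a bijective endomorphism (automorphism) of G satisfying θ(h,1) = (h, γ(h)) for all h ∈ H and θ(1,k) = (β(k), k) for all k ∈ K, where β : K → H and γ : H → K, and let η : H → H, η(h) = h · (β(γ(h)))⁻¹, which is a bijective group homomorphism of H. Then the map k ↦ η⁻¹(β(k)) takes values in the center Z(H) and is a crossed homomorphism: η⁻¹(β(k·k')) = η⁻¹(β(k)) · f_k(η⁻¹(β(k'))) for all k, k' ∈ K. -/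
/-- Let `θ` be a bijective endomorphism (automorphism) of
`G = H ⋊[f] K` with `θ (h, 1) = (h, γ h)` and `θ (1, k) = (β k, k)`, and let
`η : h ↦ h * (β (γ h))⁻¹`, a bijective group homomorphism of `H` (with two-sided
inverse `ηi`).  Then `k ↦ ηi (β k)` takes values in the center `Z(H)` and is a
crossed homomorphism: `ηi (β (k * k')) = ηi (β k) * f k (ηi (β k'))`. -/
theorem etaInv_beta_crossed_hom
    {H K : Type*} [Group H] [Group K] (f : K →* MulAut H)
    (θ : (H ⋊[f] K) →* (H ⋊[f] K))
    (hθ : Function.Bijective θ)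
    (β : K → H) (γ : H → K)
    (hθH : ∀ h : H, θ ⟨h, 1⟩ = ⟨h, γ h⟩)
    (hθK : ∀ k : K, θ ⟨1, k⟩ = ⟨β k, k⟩)
    (ηi : H → H)
    (hηi : Function.LeftInverse ηi (fun h : H => h * (β (γ h))⁻¹))
    (hηi' : Function.RightInverse ηi (fun h : H => h * (β (γ h))⁻¹)) :
    (∀ k : K, ηi (β k) ∈ Subgroup.center H) ∧
    (∀ k k' : K, ηi (β (k * k')) = ηi (β k) * f k (ηi (β k'))) := by
  set η : H → H := fun h : H => h * (β (γ h))⁻¹ with hηdef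
  have hηx : ∀ h, η h = h * (β (γ h))⁻¹ := fun h => rfl
  have hinj : Function.Injective η := hηi.injective
  have hsurj : Function.Surjective η := hηi'.surjective
  -- β 1 = 1
  have hβ1 : β 1 = 1 := by
    have h1 := hθK 1
    rw [show (⟨1, 1⟩ : H ⋊[f] K) = 1 from rfl, map_one] at h1
    have := congrArg SemidirectProduct.left h1
    simpa using this.symm
  -- f (γ h) = id and γ multiplicative
  have key1 : ∀ (h x : H), f (γ h) x = x := by
    intro h x
    have h1 := map_mul θ ⟨h, 1⟩ ⟨x, 1⟩
    have h2 : (⟨h, 1⟩ * ⟨x, 1⟩ : H ⋊[f] K) = ⟨h * x, 1⟩ := by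
      ext <;> simp [SemidirectProduct.mul_left, SemidirectProduct.mul_right]
    rw [h2, hθH, hθH, hθH] at h1
    have := congrArg SemidirectProduct.left h1
    simp [SemidirectProduct.mul_left] at this
    exact this.symm
  have keyγ : ∀ h x : H, γ (h * x) = γ h * γ x := by
    intro h x
    have h1 := map_mul θ ⟨h, 1⟩ ⟨x, 1⟩
    have h2 : (⟨h, 1⟩ * ⟨x, 1⟩ : H ⋊[f] K) = ⟨h * x, 1⟩ := by
      ext <;> simp
    rw [h2, hθH, hθH, hθH] at h1
    have := congrArg SemidirectProduct.right h1
    simpa [SemidirectProduct.mul_right] using this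
  -- β crossed hom
  have keyβ : ∀ k k' : K, β (k * k') = β k * f k (β k') := by
    intro k k'
    have h1 := map_mul θ ⟨1, k⟩ ⟨1, k'⟩
    have h2 : (⟨1, k⟩ * ⟨1, k'⟩ : H ⋊[f] K) = ⟨1, k * k'⟩ := by
      ext <;> simp
    rw [h2, hθK, hθK, hθK] at h1
    have := congrArg SemidirectProduct.left h1
    simpa [SemidirectProduct.mul_left] using this
  -- mixed relation
  have keymix : ∀ (k : K) (h : H),
      (f k h * β k = β k * f k h) ∧ γ (f k h) * k = k * γ h := by
    intro k h
    have h1 := map_mul θ ⟨1, k⟩ ⟨h, 1⟩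
    have h2 : (⟨1, k⟩ * ⟨h, 1⟩ : H ⋊[f] K) = ⟨f k h, k⟩ := by
      ext <;> simp
    have h3 : (⟨f k h, k⟩ : H ⋊[f] K) = ⟨f k h, 1⟩ * ⟨1, k⟩ := by
      ext <;> simp
    rw [h2, h3, map_mul, hθH, hθH, hθK] at h1
    have hl := congrArg SemidirectProduct.left h1
    have hr := congrArg SemidirectProduct.right h1
    simp [SemidirectProduct.mul_left, SemidirectProduct.mul_right, key1] at hl hr
    constructor
    · -- hl : f k h * β k = β k * f k h
      exact hl
    · exact hr
  have hβcen : ∀ k : K, β k ∈ Subgroup.center H := by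
    intro k
    rw [Subgroup.mem_center_iff]
    intro g
    obtain ⟨h, rfl⟩ := (f k).surjective g
    exact (keymix k h).1
  have hβinv : ∀ k : K, f k (β k⁻¹) = (β k)⁻¹ := by
    intro k
    have := keyβ k k⁻¹
    rw [mul_inv_cancel, hβ1] at this
    exact (eq_inv_of_mul_eq_one_right this.symm)
  -- γ of conj
  have keyconj : ∀ (k : K) (h : H), γ (f k h) = k * γ h * k⁻¹ := by
    intro k h
    exact eq_mul_inv_iff_mul_eq.mpr (keymix k h).2
  -- βγ commutes with f k
  have keyβγ : ∀ (k : K) (h : H), β (γ (f k h)) = f k (β (γ h)) := by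
    intro k h
    rw [keyconj, keyβ (k * γ h) k⁻¹, keyβ k (γ h)]
    have hc : (f (k * γ h)) (β k⁻¹) = (β k)⁻¹ := by
      rw [map_mul]
      simp only [MulAut.mul_apply]
      rw [show (f (γ h)) (β k⁻¹) = β k⁻¹ from key1 h _, hβinv]
    rw [hc]
    have := Subgroup.mem_center_iff.mp (hβcen k) (f k (β (γ h)))
    rw [← this, mul_inv_cancel_right]
  -- η is multiplicative
  have hηmul : ∀ a b : H, η (a * b) = η a * η b := by
    intro a b
    simp only [hηx, keyγ, keyβ, key1]
    have ca' := Subgroup.mem_center_iff.mp (hβcen (γ a))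
    have cab : Commute b (β (γ a))⁻¹ := (show Commute b (β (γ a)) from ca' b).inv_right
    have cinv : Commute (β (γ b))⁻¹ (β (γ a))⁻¹ := (show Commute (β (γ b))⁻¹ (β (γ a)) from ca' (β (γ b))⁻¹).inv_right
    rw [mul_inv_rev, cinv.eq]
    simp only [mul_assoc]
    rw [← mul_assoc b, cab.eq, mul_assoc]
  -- η commutes with f k
  have hηf : ∀ (k : K) (h : H), η (f k h) = f k (η h) := by
    intro k h
    simp only [hηx, keyβγ, map_mul, map_inv]
  -- transfers to ηi
  have hηimul : ∀ a b : H, ηi (a * b) = ηi a * ηi b := by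
    intro a b
    obtain ⟨x, rfl⟩ := hsurj a
    obtain ⟨y, rfl⟩ := hsurj b
    rw [← hηmul, hηi, hηi, hηi]
  have hηif : ∀ (k : K) (x : H), ηi (f k x) = f k (ηi x) := by
    intro k x
    apply hinj
    rw [hηi', hηf, hηi']
  constructor
  · intro k
    rw [Subgroup.mem_center_iff]
    intro g
    apply hinj
    rw [hηmul, hηmul, hηi']
    exact Subgroup.mem_center_iff.mp (hβcen k) (η g)
  · intro k k'
    rw [keyβ, hηimul, hηif]
end

section
/- Let θ be an endomorphism of G with matrix (α, β, γ, δ) such that α and δ are both bijective. Then det_H(θ) is bijective if and only if det_K(θ) is bijective. -/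
/-- Auxiliary: a "triangular" map on a product, acting by a map `p` on the first
coordinate and fiberwise bijectively on the second, is bijective iff `p` is. -/
theorem aux_tri_left {A B : Type*} [Nonempty B] (p : A → A) (q : A → B → B)
    (hq : ∀ a, Function.Bijective (q a)) :
    Function.Bijective (fun x : A × B => (p x.1, q x.1 x.2)) ↔ Function.Bijective p := by
  constructor
  · rintro ⟨hinj, hsurj⟩
    obtain ⟨b₀⟩ := ‹Nonempty B›
    constructor
    · intro a₁ a₂ h
      have h1 : (p a₁, q a₁ ((Equiv.ofBijective _ (hq a₁)).symm b₀)) =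
          (p a₂, q a₂ ((Equiv.ofBijective _ (hq a₂)).symm b₀)) := by
        have e1 : q a₁ ((Equiv.ofBijective _ (hq a₁)).symm b₀) = b₀ :=
          (Equiv.ofBijective _ (hq a₁)).apply_symm_apply b₀
        have e2 : q a₂ ((Equiv.ofBijective _ (hq a₂)).symm b₀) = b₀ :=
          (Equiv.ofBijective _ (hq a₂)).apply_symm_apply b₀
        rw [e1, e2, h]
      have := hinj (a₁ := (a₁, (Equiv.ofBijective _ (hq a₁)).symm b₀))
        (a₂ := (a₂, (Equiv.ofBijective _ (hq a₂)).symm b₀)) h1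
      exact congrArg Prod.fst this
    · intro a
      obtain ⟨x, hx⟩ := hsurj (a, b₀)
      exact ⟨x.1, congrArg Prod.fst hx⟩
  · intro hp
    constructor
    · rintro ⟨a₁, b₁⟩ ⟨a₂, b₂⟩ h
      have h1 : p a₁ = p a₂ := congrArg Prod.fst h
      have h2 : q a₁ b₁ = q a₂ b₂ := congrArg Prod.snd h
      have ha : a₁ = a₂ := hp.1 h1
      subst ha
      exact Prod.ext rfl ((hq a₁).1 h2)
    · rintro ⟨x, y⟩
      obtain ⟨a, ha⟩ := hp.2 x
      obtain ⟨b, hb⟩ := (hq a).2 y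
      exact ⟨(a, b), by simp [ha, hb]⟩

/-- Symmetric version of `aux_tri_left`. -/
theorem aux_tri_right {A B : Type*} [Nonempty A] (p : B → B) (q : B → A → A)
    (hq : ∀ b, Function.Bijective (q b)) :
    Function.Bijective (fun x : A × B => (q x.2 x.1, p x.2)) ↔ Function.Bijective p := by
  have := aux_tri_left (A := B) (B := A) p q hq
  rw [← this]
  constructor <;> intro h
  · have : (fun x : B × A => (p x.1, q x.1 x.2)) =
        (Prod.swap ∘ (fun x : A × B => (q x.2 x.1, p x.2)) ∘ Prod.swap) := rfl
    rw [this]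
    exact Prod.swap_bijective.comp (h.comp Prod.swap_bijective)
  · have : (fun x : A × B => (q x.2 x.1, p x.2)) =
        (Prod.swap ∘ (fun x : B × A => (p x.1, q x.1 x.2)) ∘ Prod.swap) := rfl
    rw [this]
    exact Prod.swap_bijective.comp (h.comp Prod.swap_bijective)

/-- Let `θ` be an endomorphism of `G = H ⋊[f] K` with matrix
`(α, β, γ, δ)` such that `α` and `δ` are bijective (with two-sided inverses `αi`
and `δi`).  Then `det_H θ : h ↦ α h * (β (δi (γ h)))⁻¹` is bijective if and only if
`det_K θ : k ↦ (γ (αi (β k)))⁻¹ * δ k` is bijective. -/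
theorem detH_bijective_iff_detK_bijective
    {H K : Type*} [Group H] [Group K] (f : K →* MulAut H)
    (θ : (H ⋊[f] K) →* (H ⋊[f] K))
    (α : H → H) (β : K → H) (γ : H → K) (δ : K → K)
    (hθH : ∀ h : H, θ ⟨h, 1⟩ = ⟨α h, γ h⟩)
    (hθK : ∀ k : K, θ ⟨1, k⟩ = ⟨β k, δ k⟩)
    (αi : H → H)
    (hαi : Function.LeftInverse αi α) (hαi' : Function.RightInverse αi α)
    (δi : K → K)
    (hδi : Function.LeftInverse δi δ) (hδi' : Function.RightInverse δi δ) :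
    Function.Bijective (fun h : H => α h * (β (δi (γ h)))⁻¹) ↔
      Function.Bijective (fun k : K => (γ (αi (β k)))⁻¹ * δ k) := by
  set dH : H → H := fun h : H => α h * (β (δi (γ h)))⁻¹ with hdH
  set dK : K → K := fun k : K => (γ (αi (β k)))⁻¹ * δ k with hdK
  have hδδi : ∀ k, δ (δi k) = k := hδi'
  have hααi : ∀ h, α (αi h) = h := hαi'
  have hδiδ : ∀ k, δi (δ k) = k := hδi
  have hαiα : ∀ h, αi (α h) = h := hαi
  -- multiplicativity relations for the matrix entries
  have hδmul : ∀ k₁ k₂ : K, δ (k₁ * k₂) = δ k₁ * δ k₂ := by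
    intro k₁ k₂
    have h0 : (⟨1, k₁⟩ : H ⋊[f] K) * ⟨1, k₂⟩ = ⟨1, k₁ * k₂⟩ := by
      ext <;> simp [SemidirectProduct.mul_left, SemidirectProduct.mul_right]
    have := map_mul θ (⟨1, k₁⟩ : H ⋊[f] K) ⟨1, k₂⟩
    rw [h0, hθK, hθK, hθK] at this
    have := congrArg SemidirectProduct.right this
    simpa [SemidirectProduct.mul_right] using this
  have hβmul : ∀ k₁ k₂ : K, β (k₁ * k₂) = β k₁ * f (δ k₁) (β k₂) := by
    intro k₁ k₂
    have h0 : (⟨1, k₁⟩ : H ⋊[f] K) * ⟨1, k₂⟩ = ⟨1, k₁ * k₂⟩ := by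
      ext <;> simp [SemidirectProduct.mul_left, SemidirectProduct.mul_right]
    have := map_mul θ (⟨1, k₁⟩ : H ⋊[f] K) ⟨1, k₂⟩
    rw [h0, hθK, hθK, hθK] at this
    have := congrArg SemidirectProduct.left this
    simpa [SemidirectProduct.mul_left] using this
  have hγmul : ∀ h₁ h₂ : H, γ (h₁ * h₂) = γ h₁ * γ h₂ := by
    intro h₁ h₂
    have h0 : (⟨h₁, 1⟩ : H ⋊[f] K) * ⟨h₂, 1⟩ = ⟨h₁ * h₂, 1⟩ := by
      ext <;> simp [SemidirectProduct.mul_left, SemidirectProduct.mul_right]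
    have := map_mul θ (⟨h₁, 1⟩ : H ⋊[f] K) ⟨h₂, 1⟩
    rw [h0, hθH, hθH, hθH] at this
    have := congrArg SemidirectProduct.right this
    simpa [SemidirectProduct.mul_right] using this
  have hαmul : ∀ h₁ h₂ : H, α (h₁ * h₂) = α h₁ * f (γ h₁) (α h₂) := by
    intro h₁ h₂
    have h0 : (⟨h₁, 1⟩ : H ⋊[f] K) * ⟨h₂, 1⟩ = ⟨h₁ * h₂, 1⟩ := by
      ext <;> simp [SemidirectProduct.mul_left, SemidirectProduct.mul_right]
    have := map_mul θ (⟨h₁, 1⟩ : H ⋊[f] K) ⟨h₂, 1⟩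
    rw [h0, hθH, hθH, hθH] at this
    have := congrArg SemidirectProduct.left this
    simpa [SemidirectProduct.mul_left] using this
  -- basic expression of θ
  have hθ : ∀ h k, θ ⟨h, k⟩ = ⟨α h * f (γ h) (β k), γ h * δ k⟩ := by
    intro h k
    have h0 : (⟨h, 1⟩ : H ⋊[f] K) * ⟨1, k⟩ = ⟨h, k⟩ := by
      ext <;> simp [SemidirectProduct.mul_left, SemidirectProduct.mul_right]
    have := map_mul θ (⟨h, 1⟩ : H ⋊[f] K) ⟨1, k⟩
    rw [h0, hθH, hθK] at this
    rw [this]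
    ext <;> simp [SemidirectProduct.mul_left, SemidirectProduct.mul_right]
  -- the two factorizations of θ
  have key1 : ∀ g : H ⋊[f] K,
      θ g = ⟨dH g.left * β (δi (γ g.left) * g.right), δ (δi (γ g.left) * g.right)⟩ := by
    intro g
    have : g = ⟨g.left, g.right⟩ := rfl
    rw [this, hθ]
    ext
    · simp [hβmul, hδδi, hdH, mul_assoc]
    · simp [hδmul, hδδi]
  have key2 : ∀ g : H ⋊[f] K,
      θ g = ⟨α (g.left * αi (β g.right)), γ (g.left * αi (β g.right)) * dK g.right⟩ := by
    intro g
    have : g = ⟨g.left, g.right⟩ := rfl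
    rw [this, hθ]
    ext
    · simp [hαmul, hααi]
    · simp [hγmul, hdK, mul_assoc]
  -- the equivalence G ≃ H × K
  let e : (H ⋊[f] K) ≃ H × K :=
    ⟨fun g => (g.left, g.right), fun p => ⟨p.1, p.2⟩, fun g => rfl, fun p => rfl⟩
  -- Step 1: Bijective θ ↔ Bijective dH
  have step1 : Function.Bijective θ ↔ Function.Bijective dH := by
    let C' : (H ⋊[f] K) → (H ⋊[f] K) := fun g => ⟨g.left * β g.right, δ g.right⟩
    let B' : (H ⋊[f] K) → (H ⋊[f] K) := fun g => ⟨dH g.left, δi (γ g.left) * g.right⟩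
    have hfac : ⇑θ = C' ∘ B' := by
      funext g
      rw [key1 g]
      rfl
    have hC' : Function.Bijective C' := by
      have : Function.LeftInverse
          (fun u : H ⋊[f] K => (⟨u.left * (β (δi u.right))⁻¹, δi u.right⟩ : H ⋊[f] K)) C' ∧
          Function.RightInverse
          (fun u : H ⋊[f] K => (⟨u.left * (β (δi u.right))⁻¹, δi u.right⟩ : H ⋊[f] K)) C' := by
        constructor
        · intro g; ext <;> simp [C', hδiδ, mul_assoc]
        · intro g; ext <;> simp [C', hδδi, mul_assoc]
      exact ⟨this.1.injective, this.2.surjective⟩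
    have hB' : Function.Bijective B' ↔ Function.Bijective dH := by
      have hBe : B' = e.symm ∘ (fun x : H × K => (dH x.1, δi (γ x.1) * x.2)) ∘ e := rfl
      rw [hBe]
      rw [Function.Bijective.of_comp_iff' e.symm.bijective,
        Function.Bijective.of_comp_iff _ e.bijective]
      exact aux_tri_left dH (fun a b => δi (γ a) * b)
        (fun a => (Equiv.mulLeft (δi (γ a))).bijective)
    rw [hfac, Function.Bijective.of_comp_iff' hC', hB']
  -- Step 2: Bijective θ ↔ Bijective dK
  have step2 : Function.Bijective θ ↔ Function.Bijective dK := by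
    let C : (H ⋊[f] K) → (H ⋊[f] K) := fun g => ⟨α g.left, γ g.left * g.right⟩
    let B : (H ⋊[f] K) → (H ⋊[f] K) := fun g => ⟨g.left * αi (β g.right), dK g.right⟩
    have hfac : ⇑θ = C ∘ B := by
      funext g
      rw [key2 g]
      rfl
    have hC : Function.Bijective C := by
      have : Function.LeftInverse
          (fun u : H ⋊[f] K => (⟨αi u.left, (γ (αi u.left))⁻¹ * u.right⟩ : H ⋊[f] K)) C ∧
          Function.RightInverse
          (fun u : H ⋊[f] K => (⟨αi u.left, (γ (αi u.left))⁻¹ * u.right⟩ : H ⋊[f] K)) C := by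
        constructor
        · intro g; ext <;> simp [C, hαiα, mul_assoc]
        · intro g; ext <;> simp [C, hααi, mul_assoc]
      exact ⟨this.1.injective, this.2.surjective⟩
    have hB : Function.Bijective B ↔ Function.Bijective dK := by
      have hBe : B = e.symm ∘ (fun x : H × K => (x.1 * αi (β x.2), dK x.2)) ∘ e := rfl
      rw [hBe]
      rw [Function.Bijective.of_comp_iff' e.symm.bijective,
        Function.Bijective.of_comp_iff _ e.bijective]
      exact aux_tri_right dK (fun b a => a * αi (β b))
        (fun b => (Equiv.mulRight (αi (β b))).bijective)
    rw [hfac, Function.Bijective.of_comp_iff' hC, hB]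
  rw [← step1, ← step2]
end

section
/- Let θ be an endomorphism of G with matrix (α, β, γ, δ) such that α and δ are bijective and Δ_K := det_K(θ) is bijective (so that Δ_H := det_H(θ) is also bijective). Then the inverse of Δ_H is given by Δ_H⁻¹(h) = α⁻¹(h) · (α⁻¹(β(Δ_K⁻¹((γ(α⁻¹(h)))⁻¹))))⁻¹ for all h ∈ H. -/
/-- Let `θ` be an endomorphism of `G = H ⋊[f] K` with matrix
`(α, β, γ, δ)` such that `α` and `δ` are bijective (with two-sided inverses `αi`,
`δi`) and `Δ_K := det_K θ : k ↦ (γ (αi (β k)))⁻¹ * δ k` is bijective (with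
two-sided inverse `ΔKi`), so that `Δ_H := det_H θ : h ↦ α h * (β (δi (γ h)))⁻¹`
is also bijective.  Then `Δ_H⁻¹ h = αi h * (αi (β (ΔKi ((γ (αi h))⁻¹))))⁻¹`. -/
theorem detH_inverse_formula
    {H K : Type*} [Group H] [Group K] (f : K →* MulAut H)
    (θ : (H ⋊[f] K) →* (H ⋊[f] K))
    (α : H → H) (β : K → H) (γ : H → K) (δ : K → K)
    (hθH : ∀ h : H, θ ⟨h, 1⟩ = ⟨α h, γ h⟩)
    (hθK : ∀ k : K, θ ⟨1, k⟩ = ⟨β k, δ k⟩)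
    (αi : H → H)
    (hαi : Function.LeftInverse αi α) (hαi' : Function.RightInverse αi α)
    (δi : K → K)
    (hδi : Function.LeftInverse δi δ) (hδi' : Function.RightInverse δi δ)
    (ΔKi : K → K)
    (hΔKi : Function.LeftInverse ΔKi (fun k : K => (γ (αi (β k)))⁻¹ * δ k))
    (hΔKi' : Function.RightInverse ΔKi (fun k : K => (γ (αi (β k)))⁻¹ * δ k)) :
    Function.Bijective (fun h : H => α h * (β (δi (γ h)))⁻¹) ∧
    (∀ h : H, Function.invFun (fun h : H => α h * (β (δi (γ h)))⁻¹) h =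
      αi h * (αi (β (ΔKi ((γ (αi h))⁻¹))))⁻¹) := by
  -- structural relations coming from multiplicativity of θ
  have key : ∀ h1 h2 : H, (⟨h1 * h2, 1⟩ : H ⋊[f] K) = ⟨h1, 1⟩ * ⟨h2, 1⟩ := by
    intro h1 h2; ext <;> simp
  have keyK : ∀ k1 k2 : K, (⟨1, k1 * k2⟩ : H ⋊[f] K) = ⟨1, k1⟩ * ⟨1, k2⟩ := by
    intro k1 k2; ext <;> simp
  have hαmul : ∀ h1 h2 : H, α (h1 * h2) = α h1 * f (γ h1) (α h2) := by
    intro h1 h2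
    have e := θ.map_mul ⟨h1, 1⟩ ⟨h2, 1⟩
    rw [← key, hθH, hθH, hθH] at e
    simpa using congrArg SemidirectProduct.left e
  have hγmul : ∀ h1 h2 : H, γ (h1 * h2) = γ h1 * γ h2 := by
    intro h1 h2
    have e := θ.map_mul ⟨h1, 1⟩ ⟨h2, 1⟩
    rw [← key, hθH, hθH, hθH] at e
    simpa using congrArg SemidirectProduct.right e
  have hβmul : ∀ k1 k2 : K, β (k1 * k2) = β k1 * f (δ k1) (β k2) := by
    intro k1 k2
    have e := θ.map_mul ⟨1, k1⟩ ⟨1, k2⟩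
    rw [← keyK, hθK, hθK, hθK] at e
    simpa using congrArg SemidirectProduct.left e
  have hδmul : ∀ k1 k2 : K, δ (k1 * k2) = δ k1 * δ k2 := by
    intro k1 k2
    have e := θ.map_mul ⟨1, k1⟩ ⟨1, k2⟩
    rw [← keyK, hθK, hθK, hθK] at e
    simpa using congrArg SemidirectProduct.right e
  have hone : (⟨1, 1⟩ : H ⋊[f] K) = 1 := rfl
  have hα1 : α 1 = 1 := by
    have e := hθH 1
    rw [hone, θ.map_one] at e
    simpa using (congrArg SemidirectProduct.left e).symm
  have hγ1 : γ 1 = 1 := by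
    have e := hθH 1
    rw [hone, θ.map_one] at e
    simpa using (congrArg SemidirectProduct.right e).symm
  have hβ1 : β 1 = 1 := by
    have e := hθK 1
    rw [hone, θ.map_one] at e
    simpa using (congrArg SemidirectProduct.left e).symm
  have hδ1 : δ 1 = 1 := by
    have e := hθK 1
    rw [hone, θ.map_one] at e
    simpa using (congrArg SemidirectProduct.right e).symm
  have hγinv : ∀ h : H, γ h⁻¹ = (γ h)⁻¹ := by
    intro h
    have e := hγmul h h⁻¹
    rw [mul_inv_cancel, hγ1] at e
    exact eq_inv_of_mul_eq_one_right e.symm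
  have hδinv : ∀ k : K, δ k⁻¹ = (δ k)⁻¹ := by
    intro k
    have e := hδmul k k⁻¹
    rw [mul_inv_cancel, hδ1] at e
    exact eq_inv_of_mul_eq_one_right e.symm
  have hαinv : ∀ h : H, α h⁻¹ = f (γ h)⁻¹ (α h)⁻¹ := by
    intro h
    have e := hαmul h h⁻¹
    rw [mul_inv_cancel, hα1] at e
    have e2 : f (γ h) (α h⁻¹) = (α h)⁻¹ := eq_inv_of_mul_eq_one_right e.symm
    have := congrArg (f (γ h)⁻¹) e2
    simpa [map_inv, ← MulAut.mul_apply, ← map_mul] using this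
  have hβinv : ∀ k : K, β k⁻¹ = f (δ k)⁻¹ (β k)⁻¹ := by
    intro k
    have e := hβmul k k⁻¹
    rw [mul_inv_cancel, hβ1] at e
    have e2 : f (δ k) (β k⁻¹) = (β k)⁻¹ := eq_inv_of_mul_eq_one_right e.symm
    have := congrArg (f (δ k)⁻¹) e2
    simpa [map_inv, ← MulAut.mul_apply, ← map_mul] using this
  set ΔH : H → H := fun h : H => α h * (β (δi (γ h)))⁻¹ with hΔH
  set g : H → H := fun h : H => αi h * (αi (β (ΔKi ((γ (αi h))⁻¹))))⁻¹ with hg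
  -- right inverse : ΔH (g h) = h
  have hright : ∀ h : H, ΔH (g h) = h := by
    intro h
    set a := αi h with ha
    set t := ΔKi ((γ a)⁻¹) with ht
    set b := αi (β t) with hb
    have hαa : α a = h := hαi' h
    have hαb : α b = β t := hαi' (β t)
    have hΔKt : (γ b)⁻¹ * δ t = (γ a)⁻¹ := hΔKi' ((γ a)⁻¹)
    have hγab : γ a * (γ b)⁻¹ = (δ t)⁻¹ := by
      have : γ a = (δ t)⁻¹ * γ b := by
        rw [← inv_inv (γ a), ← hΔKt]; group
      rw [this]; group
    have hgab : γ (a * b⁻¹) = (δ t)⁻¹ := by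
      rw [hγmul, hγinv, hγab]
    have hδiγ : δi (γ (a * b⁻¹)) = t⁻¹ := by
      rw [hgab, ← hδinv, hδi]
    have hβt : β t⁻¹ = f (δ t)⁻¹ (β t)⁻¹ := hβinv t
    have hαab : α (a * b⁻¹) = h * f (δ t)⁻¹ (β t)⁻¹ := by
      rw [hαmul, hαinv, hαa, hαb, ← MulAut.mul_apply, ← map_mul, hγab]
    show α (a * b⁻¹) * (β (δi (γ (a * b⁻¹))))⁻¹ = h
    rw [hδiγ, hβt, hαab]
    group
  -- left inverse : g (ΔH h) = h
  have hleft : ∀ h : H, g (ΔH h) = h := by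
    intro h
    set s := δi (γ h) with hs
    have hδs : δ s = γ h := hδi' (γ h)
    have hβs : β s⁻¹ = f (δ s)⁻¹ (β s)⁻¹ := hβinv s
    have hαw : α (h * αi (β s⁻¹)) = ΔH h := by
      rw [hαmul, hαi' (β s⁻¹), hβs, hδs, ← MulAut.mul_apply, ← map_mul,
        mul_inv_cancel]
      simp [hΔH, hs]
    have hαiw : αi (ΔH h) = h * αi (β s⁻¹) := by
      rw [← hαw, hαi]
    have hγw : γ (αi (ΔH h)) = ((γ (αi (β s⁻¹)))⁻¹ * δ s⁻¹)⁻¹ := by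
      rw [hαiw, hγmul, hδinv, hδs]
      group
    have hΔKiw : ΔKi ((γ (αi (ΔH h)))⁻¹) = s⁻¹ := by
      rw [hγw, inv_inv]
      exact hΔKi s⁻¹
    show αi (ΔH h) * (αi (β (ΔKi ((γ (αi (ΔH h)))⁻¹))))⁻¹ = h
    rw [hΔKiw, hαiw]
    group
  have hbij : Function.Bijective ΔH := by
    refine ⟨Function.LeftInverse.injective hleft, Function.RightInverse.surjective hright⟩
  refine ⟨hbij, fun h => ?_⟩
  have h1 : ΔH (Function.invFun ΔH h) = h := Function.rightInverse_invFun hbij.2 h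
  have h2 : ΔH (g h) = h := hright h
  exact hbij.1 (h1.trans h2.symm)
end

section
/- Let θ be an endomorphism of G with matrix (α, β, γ, δ) such that α and δ are bijective and Δ_H := det_H(θ) is bijective (so that θ is bijective and Δ_K := det_K(θ) is bijective). Then for all h ∈ H and k ∈ K, the inverse of θ is given by θ⁻¹(h,k) = (Δ_H⁻¹(h) · f_{c(h)}(b(k)), c(h) · Δ_K⁻¹(k)), where b(k) = (α⁻¹(β(Δ_K⁻¹(k))))⁻¹ and c(h) = (δ⁻¹(γ(Δ_H⁻¹(h))))⁻¹. -/
/-- Let `θ` be an endomorphism of `G = H ⋊[f] K` with matrix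
`(α, β, γ, δ)` such that `α` and `δ` are bijective (with two-sided inverses `αi`,
`δi`) and `Δ_H := det_H θ : h ↦ α h * (β (δi (γ h)))⁻¹` is bijective (with
two-sided inverse `ΔHi`), so that `θ` is bijective and
`Δ_K := det_K θ : k ↦ (γ (αi (β k)))⁻¹ * δ k` is bijective.  Then
`θ⁻¹ (h, k) = (ΔHi h * f (c h) (b k), c h * Δ_K⁻¹ k)` where
`b k = (αi (β (Δ_K⁻¹ k)))⁻¹` and `c h = (δi (γ (ΔHi h)))⁻¹`. -/
theorem inverse_formula
    {H K : Type*} [Group H] [Group K] (f : K →* MulAut H)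
    (θ : (H ⋊[f] K) →* (H ⋊[f] K))
    (α : H → H) (β : K → H) (γ : H → K) (δ : K → K)
    (hθH : ∀ h : H, θ ⟨h, 1⟩ = ⟨α h, γ h⟩)
    (hθK : ∀ k : K, θ ⟨1, k⟩ = ⟨β k, δ k⟩)
    (αi : H → H)
    (hαi : Function.LeftInverse αi α) (hαi' : Function.RightInverse αi α)
    (δi : K → K)
    (hδi : Function.LeftInverse δi δ) (hδi' : Function.RightInverse δi δ)
    (ΔHi : H → H)
    (hΔHi : Function.LeftInverse ΔHi (fun h : H => α h * (β (δi (γ h)))⁻¹))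
    (hΔHi' : Function.RightInverse ΔHi (fun h : H => α h * (β (δi (γ h)))⁻¹)) :
    Function.Bijective θ ∧
    Function.Bijective (fun k : K => (γ (αi (β k)))⁻¹ * δ k) ∧
    (∀ (h : H) (k : K), Function.invFun θ (⟨h, k⟩ : H ⋊[f] K) =
      ⟨ΔHi h * f ((δi (γ (ΔHi h)))⁻¹)
          ((αi (β (Function.invFun (fun k : K => (γ (αi (β k)))⁻¹ * δ k) k)))⁻¹),
        (δi (γ (ΔHi h)))⁻¹ *
          Function.invFun (fun k : K => (γ (αi (β k)))⁻¹ * δ k) k⟩) := by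
  classical
  -- basic multiplication facts in the semidirect product
  have mulmk : ∀ (h₁ h₂ : H) (k₁ k₂ : K),
      (⟨h₁, k₁⟩ : H ⋊[f] K) * ⟨h₂, k₂⟩ = ⟨h₁ * f k₁ h₂, k₁ * k₂⟩ := fun _ _ _ _ => rfl
  have onemk : (1 : H ⋊[f] K) = ⟨1, 1⟩ := rfl
  have comp : ∀ {a b : H} {c d : K}, (⟨a, c⟩ : H ⋊[f] K) = ⟨b, d⟩ → a = b ∧ c = d := by
    intro a b c d hh
    exact ⟨congrArg SemidirectProduct.left hh, congrArg SemidirectProduct.right hh⟩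
  have hsplit : ∀ (h : H) (k : K), (⟨h, k⟩ : H ⋊[f] K) = ⟨h, 1⟩ * ⟨1, k⟩ := by
    intro h k; rw [mulmk]; simp
  have hθ : ∀ (h : H) (k : K), θ ⟨h, k⟩ = ⟨α h * f (γ h) (β k), γ h * δ k⟩ := by
    intro h k; rw [hsplit, map_mul, hθH, hθK, mulmk]
  have fcancel : ∀ (k : K) (x : H), f k⁻¹ (f k x) = x := by
    intro k x; rw [← MulAut.mul_apply, ← map_mul, inv_mul_cancel, map_one]; rfl
  have fcancel' : ∀ (k : K) (x : H), f k (f k⁻¹ x) = x := by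
    intro k x; rw [← MulAut.mul_apply, ← map_mul, mul_inv_cancel, map_one]; rfl
  -- values at 1
  have h11 : θ ⟨1, 1⟩ = ⟨1, 1⟩ := by rw [← onemk, map_one]
  have hαγ1 := comp ((hθH 1).symm.trans h11)
  have hβδ1 := comp ((hθK 1).symm.trans h11)
  have hα1 : α 1 = 1 := hαγ1.1
  have hγ1 : γ 1 = 1 := hαγ1.2
  have hβ1 : β 1 = 1 := hβδ1.1
  have hδ1 : δ 1 = 1 := hβδ1.2
  -- multiplicativity of the matrix entries
  have hαγ : ∀ h h', α (h * h') = α h * f (γ h) (α h') ∧ γ (h * h') = γ h * γ h' := by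
    intro h h'
    have e : θ ⟨h * h', 1⟩ = θ (⟨h, 1⟩ * ⟨h', 1⟩) := by rw [mulmk]; simp
    rw [map_mul, hθH, hθH, hθH, mulmk] at e
    exact comp e
  have hβδ : ∀ k k', β (k * k') = β k * f (δ k) (β k') ∧ δ (k * k') = δ k * δ k' := by
    intro k k'
    have e : θ ⟨1, k * k'⟩ = θ (⟨1, k⟩ * ⟨1, k'⟩) := by rw [mulmk]; simp
    rw [map_mul, hθK, hθK, hθK, mulmk] at e
    exact comp e
  -- behaviour on inverses
  have hγinv : ∀ h : H, γ h⁻¹ = (γ h)⁻¹ := by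
    intro h
    have e := (hαγ h h⁻¹).2
    rw [mul_inv_cancel, hγ1] at e
    exact (inv_eq_of_mul_eq_one_right e.symm).symm
  have hδinv : ∀ k : K, δ k⁻¹ = (δ k)⁻¹ := by
    intro k
    have e := (hβδ k k⁻¹).2
    rw [mul_inv_cancel, hδ1] at e
    exact (inv_eq_of_mul_eq_one_right e.symm).symm
  have hαinv : ∀ h : H, α h⁻¹ = f (γ h)⁻¹ (α h)⁻¹ := by
    intro h
    have e := (hαγ h h⁻¹).1
    rw [mul_inv_cancel, hα1] at e
    have e2 : f (γ h) (α h⁻¹) = (α h)⁻¹ := (inv_eq_of_mul_eq_one_right e.symm).symm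
    rw [← e2, fcancel]
  have hβinv : ∀ k : K, β k⁻¹ = f (δ k)⁻¹ (β k)⁻¹ := by
    intro k
    have e := (hβδ k k⁻¹).1
    rw [mul_inv_cancel, hβ1] at e
    have e2 : f (δ k) (β k⁻¹) = (β k)⁻¹ := (inv_eq_of_mul_eq_one_right e.symm).symm
    rw [← e2, fcancel]
  have hδi1 : δi 1 = 1 := by have := hδi 1; rwa [hδ1] at this
  have hδiinv : ∀ x : K, δi x⁻¹ = (δi x)⁻¹ := by
    intro x
    have e : δ ((δi x)⁻¹) = x⁻¹ := by rw [hδinv, hδi']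
    rw [← e, hδi]
  -- key identity 1 : θ ⟨h, (δi (γ h))⁻¹⟩ = ⟨Δ_H h, 1⟩
  have I1 : ∀ h : H, θ ⟨h, (δi (γ h))⁻¹⟩ = ⟨α h * (β (δi (γ h)))⁻¹, 1⟩ := by
    intro h
    rw [hθ]
    simp only [SemidirectProduct.ext_iff]
    constructor
    · rw [hβinv, hδi', fcancel']
    · rw [hδinv, hδi', mul_inv_cancel]
  -- key identity 2 : θ ⟨(αi (β k))⁻¹, k⟩ = ⟨1, Δ_K k⟩
  have I2 : ∀ k : K, θ ⟨(αi (β k))⁻¹, k⟩ = ⟨1, (γ (αi (β k)))⁻¹ * δ k⟩ := by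
    intro k
    rw [hθ]
    simp only [SemidirectProduct.ext_iff]
    constructor
    · rw [hαinv, hαi', hγinv, ← map_mul, inv_mul_cancel, map_one]
    · rw [hγinv]
  -- injectivity of θ
  have θinj : Function.Injective θ := by
    refine (injective_iff_map_eq_one θ).mpr ?_
    rintro ⟨h, k⟩ hx
    have hx' := hx
    rw [hθ] at hx'
    obtain ⟨e1, e2⟩ := comp (hx'.trans onemk)
    have hk : k = (δi (γ h))⁻¹ := by
      have e3 : (γ h)⁻¹ = δ k := inv_eq_of_mul_eq_one_right e2
      rw [← hδi k, ← e3, hδiinv]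
    have h5 : (⟨α h * (β (δi (γ h)))⁻¹, (1 : K)⟩ : H ⋊[f] K) = ⟨1, 1⟩ := by
      rw [← I1, ← hk, hx, onemk]
    have e4 : α h * (β (δi (γ h)))⁻¹ = 1 := (comp h5).1
    have hΔ1 : α (1 : H) * (β (δi (γ (1 : H))))⁻¹ = 1 := by
      rw [hα1, hγ1, hδi1, hβ1]; simp
    have hh : h = 1 := by
      have t1 : ΔHi (α h * (β (δi (γ h)))⁻¹) = h := hΔHi h
      have t2 : ΔHi (α (1 : H) * (β (δi (γ (1 : H))))⁻¹) = 1 := hΔHi 1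
      rw [e4] at t1
      rw [hΔ1] at t2
      rw [← t1, t2]
    rw [hh, hγ1, hδi1, inv_one] at hk
    rw [hh, hk, onemk]
  -- surjectivity of θ
  have θsurj : Function.Surjective θ := by
    rintro ⟨x, y⟩
    refine ⟨⟨ΔHi (x * (β (δi y))⁻¹), (δi (γ (ΔHi (x * (β (δi y))⁻¹))))⁻¹⟩ * ⟨1, δi y⟩, ?_⟩
    have hr : α (ΔHi (x * (β (δi y))⁻¹)) * (β (δi (γ (ΔHi (x * (β (δi y))⁻¹)))))⁻¹
        = x * (β (δi y))⁻¹ := hΔHi' (x * (β (δi y))⁻¹)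
    rw [map_mul, I1, hθK, hr, hδi', mulmk]
    simp
  -- bijectivity of Δ_K
  have ΔKinj : Function.Injective (fun k : K => (γ (αi (β k)))⁻¹ * δ k) := by
    intro k k' he
    dsimp only at he
    have h2 := θinj (((I2 k).trans (by rw [he])).trans (I2 k').symm)
    exact (comp h2).2
  have ΔKsurj : Function.Surjective (fun k : K => (γ (αi (β k)))⁻¹ * δ k) := by
    intro y
    obtain ⟨⟨h, k⟩, hp⟩ := θsurj ⟨1, y⟩
    have hp' := hp
    rw [hθ] at hp'
    obtain ⟨e1, e2⟩ := comp hp'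
    have hu : α h⁻¹ = β k := by
      have e3 : (α h)⁻¹ = f (γ h) (β k) := inv_eq_of_mul_eq_one_right e1
      rw [hαinv, e3, fcancel]
    have hh : (αi (β k))⁻¹ = h := by rw [← hu, hαi, inv_inv]
    refine ⟨k, ?_⟩
    have e5 := I2 k
    rw [hh, hp] at e5
    exact ((comp e5).2).symm
  refine ⟨⟨θinj, θsurj⟩, ⟨ΔKinj, ΔKsurj⟩, ?_⟩
  intro h k
  set k' := Function.invFun (fun k : K => (γ (αi (β k)))⁻¹ * δ k) k with hk'
  have hΔK : (γ (αi (β k')))⁻¹ * δ k' = k := by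
    have := Function.rightInverse_invFun ΔKsurj k
    rw [← hk'] at this
    exact this
  have key : θ (⟨ΔHi h, (δi (γ (ΔHi h)))⁻¹⟩ * ⟨(αi (β k'))⁻¹, k'⟩) = ⟨h, k⟩ := by
    have hr2 : α (ΔHi h) * (β (δi (γ (ΔHi h))))⁻¹ = h := hΔHi' h
    rw [map_mul, I1, I2, hr2, mulmk, hΔK]
    simp
  calc Function.invFun θ (⟨h, k⟩ : H ⋊[f] K)
      = Function.invFun θ (θ (⟨ΔHi h, (δi (γ (ΔHi h)))⁻¹⟩ * ⟨(αi (β k'))⁻¹, k'⟩)) := by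
        rw [key]
    _ = ⟨ΔHi h, (δi (γ (ΔHi h)))⁻¹⟩ * ⟨(αi (β k'))⁻¹, k'⟩ :=
        Function.leftInverse_invFun θinj _
    _ = _ := by rw [mulmk]
end
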